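/- arXiv:0902.3210 — 7 statements merged into one kernel-verified Lean document; each statement's English description precedes it below -/
import Mathlib

section
/- For nonnegative integers n, m, r with n ≥ r and any real x ≥ 0, the identity ∑_{k=0}^{n-r} (x/(x+1))^k · C(m+k-1, k) = (1+x)^m · I_{1/(x+1)}(m, n-r+1) holds, where I_t(a,b) is the regularized incomplete beta function. -/
open Finset

/-- Regularized incomplete beta function for positive integer parameters,
via the binomial-sum formula `I_t(a,b) = ∑_{j=a}^{a+b-1} C(a+b-1,j) t^j (1-t)^{a+b-1-j}`. -/
noncomputable def regIncBetaSum (a b : ℕ) (t : ℝ) : ℝ :=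
  ∑ j ∈ Finset.Icc a (a + b - 1), (Nat.choose (a + b - 1) j : ℝ) * t ^ j * (1 - t) ^ (a + b - 1 - j)

lemma key_sum_choose (m N : ℕ) (t : ℝ) :
    ∑ k ∈ Finset.range (N+1), (1-t)^k * (Nat.choose (m+k-1) k : ℝ)
      = ∑ i ∈ Finset.range (N+1), (Nat.choose (m+N) i : ℝ) * t^(N-i) * (1-t)^i := by
  induction N with
  | zero => simp
  | succ N ih =>
    rw [Finset.sum_range_succ, ih]
    have hm : m + (N+1) - 1 = m + N := by omega
    rw [hm]
    have h1 : ∑ i ∈ Finset.range (N+1+1), (Nat.choose (m+N+1) i : ℝ) * t^(N+1-i) * (1-t)^i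
        = ∑ i ∈ Finset.range (N+1), (Nat.choose (m+N+1) (i+1) : ℝ) * t^(N-i) * (1-t)^(i+1)
          + t^(N+1) := by
      rw [Finset.sum_range_succ']
      simp [Nat.succ_sub_succ]
    have hmn : m + (N+1) = m + N + 1 := rfl
    rw [hmn, h1]
    have h2 : ∑ i ∈ Finset.range (N+1), (Nat.choose (m+N+1) (i+1) : ℝ) * t^(N-i) * (1-t)^(i+1)
        = ∑ i ∈ Finset.range (N+1), (Nat.choose (m+N) i : ℝ) * t^(N-i) * (1-t)^(i+1)
          + ∑ i ∈ Finset.range (N+1), (Nat.choose (m+N) (i+1) : ℝ) * t^(N-i) * (1-t)^(i+1) := by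
      rw [← Finset.sum_add_distrib]
      refine Finset.sum_congr rfl fun i _ => ?_
      rw [Nat.choose_succ_succ]
      push_cast
      ring
    rw [h2]
    have h3 : ∑ i ∈ Finset.range (N+1), (Nat.choose (m+N) (i+1) : ℝ) * t^(N-i) * (1-t)^(i+1)
          + t^(N+1)
        = ∑ i ∈ Finset.range (N+1+1), (Nat.choose (m+N) i : ℝ) * t^(N+1-i) * (1-t)^i := by
      conv_rhs => rw [Finset.sum_range_succ']
      simp only [Nat.add_sub_add_right, Nat.choose_zero_right, Nat.cast_one, one_mul,
        pow_zero, mul_one, Nat.sub_zero]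
    have h4 : ∑ i ∈ Finset.range (N+1+1), (Nat.choose (m+N) i : ℝ) * t^(N+1-i) * (1-t)^i
        = t * ∑ i ∈ Finset.range (N+1), (Nat.choose (m+N) i : ℝ) * t^(N-i) * (1-t)^i
          + (Nat.choose (m+N) (N+1) : ℝ) * (1-t)^(N+1) := by
      rw [Finset.sum_range_succ, Finset.mul_sum]
      congr 1
      · refine Finset.sum_congr rfl fun i hi => ?_
        have : N + 1 - i = (N - i) + 1 := by
          have := Finset.mem_range.mp hi; omega
        rw [this, pow_succ]
        ring
      · simp
    have h5 : ∑ i ∈ Finset.range (N+1), (Nat.choose (m+N) i : ℝ) * t^(N-i) * (1-t)^(i+1)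
        = (1-t) * ∑ i ∈ Finset.range (N+1), (Nat.choose (m+N) i : ℝ) * t^(N-i) * (1-t)^i := by
      rw [Finset.mul_sum]
      refine Finset.sum_congr rfl fun i _ => ?_
      rw [pow_succ]; ring
    rw [h5]
    linear_combination -h3 - h4

lemma regIncBetaSum_eq (m N : ℕ) (t : ℝ) :
    regIncBetaSum m (N+1) t
      = t^m * ∑ i ∈ Finset.range (N+1), (Nat.choose (m+N) i : ℝ) * t^(N-i) * (1-t)^i := by
  unfold regIncBetaSum
  have hm : m + (N+1) - 1 = m + N := by omega
  rw [hm, Finset.mul_sum]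
  refine Finset.sum_nbij' (fun j => m + N - j) (fun i => m + N - i) ?_ ?_ ?_ ?_ ?_
  · intro a ha
    simp only [Finset.mem_Icc] at ha
    simp only [Finset.mem_range]
    omega
  · intro a ha
    simp only [Finset.mem_range] at ha
    simp only [Finset.mem_Icc]
    omega
  · intro a ha
    simp only [Finset.mem_Icc] at ha
    omega
  · intro a ha
    simp only [Finset.mem_range] at ha
    omega
  · intro a ha
    simp only [Finset.mem_Icc] at ha
    have hle : a ≤ m + N := ha.2
    have h1 : N - (m + N - a) = a - m := by omega
    have h2 : t ^ a = t ^ m * t ^ (a - m) := by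
      rw [← pow_add]
      congr 1
      omega
    rw [Nat.choose_symm hle, h1, h2]
    ring

/-- for nonnegative integers `n ≥ r`, `m`, and real `x ≥ 0`,
`∑_{k=0}^{n-r} (x/(x+1))^k C(m+k-1,k) = (1+x)^m ⬝ I_{1/(x+1)}(m, n-r+1)`. -/
theorem sum_choose_eq_regIncBeta (n m r : ℕ) (hnr : r ≤ n) (x : ℝ) (hx : 0 ≤ x) :
    ∑ k ∈ Finset.range (n - r + 1), (x / (x + 1)) ^ k * (Nat.choose (m + k - 1) k : ℝ)
      = (1 + x) ^ m * regIncBetaSum m (n - r + 1) (1 / (x + 1)) := by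
  have hx1 : x + 1 ≠ 0 := by positivity
  have h1 : x / (x + 1) = 1 - 1 / (x + 1) := by field_simp; ring
  rw [h1, regIncBetaSum_eq m (n - r) (1/(x+1)),
    key_sum_choose m (n - r) (1/(x+1)), ← mul_assoc]
  have h2 : (1 + x) ^ m * (1 / (x + 1)) ^ m = 1 := by
    rw [← mul_pow]
    rw [mul_one_div, add_comm 1 x, div_self hx1, one_pow]
  rw [h2, one_mul]
end

section
/- For nonnegative integers n, r, m with n ≥ r and real x ≥ 0, ∑_{k=0}^{n-r} x^k (1+x)^{n-r-k} C(m+k-1, k) = ∑_{k=0}^{n-r} C(n-r+m, k) x^k. -/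
open Finset

lemma sum_pow_mul_choose_aux (m : ℕ) (x : ℝ) : ∀ q : ℕ,
    ∑ k ∈ Finset.range (q + 1),
        x ^ k * (1 + x) ^ (q - k) * (Nat.choose (m + k - 1) k : ℝ)
      = ∑ k ∈ Finset.range (q + 1), (Nat.choose (q + m) k : ℝ) * x ^ k := by
  intro q
  induction q with
  | zero => simp
  | succ q ih =>
    rw [Finset.sum_range_succ]
    have h1 : ∀ k ∈ Finset.range (q + 1),
        x ^ k * (1 + x) ^ (q + 1 - k) * (Nat.choose (m + k - 1) k : ℝ)
          = (1 + x) * (x ^ k * (1 + x) ^ (q - k) * (Nat.choose (m + k - 1) k : ℝ)) := by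
      intro k hk
      rw [Finset.mem_range] at hk
      have hq : q + 1 - k = (q - k) + 1 := by omega
      rw [hq]; ring
    rw [Finset.sum_congr rfl h1, ← Finset.mul_sum, ih]
    have hc : m + (q + 1) - 1 = m + q := by omega
    rw [hc]
    -- rewrite RHS
    rw [Finset.sum_range_succ' (fun k => (Nat.choose (q + 1 + m) k : ℝ) * x ^ k) (q + 1)]
    have h2 : ∀ k ∈ Finset.range (q + 1),
        (Nat.choose (q + 1 + m) (k + 1) : ℝ) * x ^ (k + 1)
          = (Nat.choose (q + m) k : ℝ) * x ^ (k + 1)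
            + (Nat.choose (q + m) (k + 1) : ℝ) * x ^ (k + 1) := by
      intro k hk
      have : q + 1 + m = (q + m) + 1 := by omega
      rw [this, Nat.choose_succ_succ, Nat.cast_add]
      ring
    rw [Finset.sum_congr rfl h2, Finset.sum_add_distrib]
    have h3 : ∑ k ∈ Finset.range (q + 1), (Nat.choose (q + m) k : ℝ) * x ^ (k + 1)
        = x * ∑ k ∈ Finset.range (q + 1), (Nat.choose (q + m) k : ℝ) * x ^ k := by
      rw [Finset.mul_sum]; apply Finset.sum_congr rfl; intro k _; ring
    have h4 : ∑ k ∈ Finset.range (q + 1), (Nat.choose (q + m) (k + 1) : ℝ) * x ^ (k + 1)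
        = (∑ k ∈ Finset.range q, (Nat.choose (q + m) (k + 1) : ℝ) * x ^ (k + 1))
            + (Nat.choose (q + m) (q + 1) : ℝ) * x ^ (q + 1) := by
      rw [Finset.sum_range_succ]
    have h5 : ∑ k ∈ Finset.range (q + 1), (Nat.choose (q + m) k : ℝ) * x ^ k
        = (∑ k ∈ Finset.range q, (Nat.choose (q + m) (k + 1) : ℝ) * x ^ (k + 1)) + 1 := by
      rw [Finset.sum_range_succ' (fun k => (Nat.choose (q + m) k : ℝ) * x ^ k) q]
      simp
    rw [h3, h4]
    have hmq : (Nat.choose (m + q) (q + 1) : ℝ) = (Nat.choose (q + m) (q + 1) : ℝ) := by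
      rw [Nat.add_comm m q]
    rw [hmq]
    simp only [Nat.sub_self, pow_zero, Nat.choose_zero_right, Nat.cast_one, mul_one]
    nlinarith [h5]

/-- for nonnegative integers `n ≥ r`, `m`, and real `x ≥ 0`,
`∑_{k=0}^{n-r} x^k (1+x)^{n-r-k} C(m+k-1,k) = ∑_{k=0}^{n-r} C(n-r+m,k) x^k`. -/
theorem sum_pow_mul_choose_eq (n r m : ℕ) (hnr : r ≤ n) (x : ℝ) (hx : 0 ≤ x) :
    ∑ k ∈ Finset.range (n - r + 1),
        x ^ k * (1 + x) ^ (n - r - k) * (Nat.choose (m + k - 1) k : ℝ)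
      = ∑ k ∈ Finset.range (n - r + 1), (Nat.choose (n - r + m) k : ℝ) * x ^ k := by
  exact sum_pow_mul_choose_aux m x (n - r)
end

section
/- For any integers T_f ≥ U_f ≥ 1, U_c ≥ 1, δ ∈ (0,1), and κ ≥ 0, the double sum ∑_{k=1}^{T_f−U_f} (1/k!) ∑_{j=1}^{k} C(k,j) (κ/(κ+1))^{k−j} [∏_{n=0}^{k−j−1}(U_c+n)] [∏_{m=0}^{j−1}(m−δ)] equals ∑_{j=0}^{T_f−U_f−1} (κ/(κ+1))^j C(U_c+j−1, j) ∑_{l=1}^{T_f−U_f−j} (1/l!) ∏_{m=0}^{l−1}(m−δ). -/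
open Finset

lemma prod_asc_eq_choose (Uc : ℕ) (hUc : 1 ≤ Uc) (i : ℕ) :
    ∏ n ∈ Finset.range i, ((Uc : ℝ) + n)
      = (Nat.choose (Uc + i - 1) i : ℝ) * (Nat.factorial i : ℝ) := by
  induction i with
  | zero => simp
  | succ i ih =>
    rw [Finset.prod_range_succ, ih]
    have h1 : Uc + (i + 1) - 1 = (Uc + i - 1) + 1 := by omega
    have h2 : Uc + i - 1 + 1 = Uc + i := by omega
    have key : (Uc + i) * Nat.choose (Uc + i - 1) i
        = Nat.choose (Uc + i) (i + 1) * (i + 1) := by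
      have := Nat.add_one_mul_choose_eq (Uc + i - 1) i
      simp only [Nat.succ_eq_add_one, h2] at this
      omega
    have keyR : ((Uc : ℝ) + i) * (Nat.choose (Uc + i - 1) i : ℝ)
        = (Nat.choose (Uc + i) (i + 1) : ℝ) * ((i : ℝ) + 1) := by
      have := congrArg (Nat.cast (R := ℝ)) key
      push_cast at this
      linarith [this]
    rw [h1, h2, Nat.factorial_succ]
    push_cast
    nlinarith [keyR]

theorem double_sum_rearrangement (Tf Uf Uc : ℕ) (hUf : 1 ≤ Uf) (hTfUf : Uf ≤ Tf)
    (hUc : 1 ≤ Uc) (δ : ℝ) (hδ0 : 0 < δ) (hδ1 : δ < 1) (κ : ℝ) (hκ : 0 ≤ κ) :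
    ∑ k ∈ Finset.Icc 1 (Tf - Uf), (1 / (Nat.factorial k : ℝ)) *
        ∑ j ∈ Finset.Icc 1 k, (Nat.choose k j : ℝ) * (κ / (κ + 1)) ^ (k - j) *
          (∏ n ∈ Finset.range (k - j), ((Uc : ℝ) + n)) *
          (∏ m ∈ Finset.range j, ((m : ℝ) - δ))
      = ∑ j ∈ Finset.range (Tf - Uf), (κ / (κ + 1)) ^ j * (Nat.choose (Uc + j - 1) j : ℝ) *
          ∑ l ∈ Finset.Icc 1 (Tf - Uf - j), (1 / (Nat.factorial l : ℝ)) *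
            ∏ m ∈ Finset.range l, ((m : ℝ) - δ) := by
  set N := Tf - Uf with hN
  set f : ℕ → ℝ := fun i => (κ / (κ + 1)) ^ i * (Nat.choose (Uc + i - 1) i : ℝ) with hf
  set g : ℕ → ℝ := fun l => (1 / (Nat.factorial l : ℝ)) *
      ∏ m ∈ Finset.range l, ((m : ℝ) - δ) with hg
  have step1 : ∀ k ∈ Finset.Icc 1 N,
      (1 / (Nat.factorial k : ℝ)) *
        ∑ j ∈ Finset.Icc 1 k, (Nat.choose k j : ℝ) * (κ / (κ + 1)) ^ (k - j) *
          (∏ n ∈ Finset.range (k - j), ((Uc : ℝ) + n)) *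
          (∏ m ∈ Finset.range j, ((m : ℝ) - δ))
      = ∑ j ∈ Finset.Icc 1 k, f (k - j) * g j := by
    intro k hk
    rw [Finset.mul_sum]
    refine Finset.sum_congr rfl (fun j hj => ?_)
    simp only [Finset.mem_Icc] at hj
    rw [prod_asc_eq_choose Uc hUc (k - j)]
    have hfact : (Nat.choose k j : ℝ) * (Nat.factorial j : ℝ)
        * (Nat.factorial (k - j) : ℝ) = (Nat.factorial k : ℝ) := by
      exact_mod_cast congrArg (Nat.cast (R := ℝ))
        (Nat.choose_mul_factorial_mul_factorial hj.2)
    have hk0 : (Nat.factorial k : ℝ) ≠ 0 := by positivity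
    have hj0 : (Nat.factorial j : ℝ) ≠ 0 := by positivity
    have key : (1 / (Nat.factorial k : ℝ)) *
        ((Nat.choose k j : ℝ) * (Nat.factorial (k - j) : ℝ)) = 1 / (Nat.factorial j : ℝ) := by
      field_simp
      linear_combination hfact
    simp only [hf, hg]
    linear_combination ((κ / (κ + 1)) ^ (k - j) *
      (Nat.choose (Uc + (k - j) - 1) (k - j) : ℝ) *
      ∏ m ∈ Finset.range j, ((m : ℝ) - δ)) * key
  rw [Finset.sum_congr rfl step1]
  -- reindex inner sum: j ↦ i = k - j
  have step2 : ∀ k ∈ Finset.Icc 1 N,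
      ∑ j ∈ Finset.Icc 1 k, f (k - j) * g j
        = ∑ i ∈ Finset.range k, f i * g (k - i) := by
    intro k hk
    refine Finset.sum_nbij' (fun j => k - j) (fun i => k - i) ?_ ?_ ?_ ?_ ?_
    · intro j hj; simp only [Finset.mem_Icc] at hj; simp only [Finset.mem_range]; omega
    · intro i hi; simp only [Finset.mem_range] at hi; simp only [Finset.mem_Icc]; omega
    · intro j hj; simp only [Finset.mem_Icc] at hj; show k - (k - j) = j; omega
    · intro i hi; simp only [Finset.mem_range] at hi; show k - (k - i) = i; omega
    · intro j hj; simp only [Finset.mem_Icc] at hj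
      show f (k - j) * g j = f (k - j) * g (k - (k - j))
      rw [show k - (k - j) = j by omega]
  rw [Finset.sum_congr rfl step2]
  -- RHS is ∑ i ∈ range N, f i * ∑ l ∈ Icc 1 (N - i), g l
  have rhs_eq : ∑ j ∈ Finset.range N, (κ / (κ + 1)) ^ j * (Nat.choose (Uc + j - 1) j : ℝ) *
          ∑ l ∈ Finset.Icc 1 (N - j), (1 / (Nat.factorial l : ℝ)) *
            ∏ m ∈ Finset.range l, ((m : ℝ) - δ)
      = ∑ i ∈ Finset.range N, ∑ l ∈ Finset.Icc 1 (N - i), f i * g l := by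
    refine Finset.sum_congr rfl (fun i hi => ?_)
    rw [Finset.mul_sum]
  rw [rhs_eq]
  -- sigma bijection between {(k,i) : k∈Icc 1 N, i∈range k} and {(i,l) : i∈range N, l∈Icc 1 (N-i)}
  rw [Finset.sum_sigma', Finset.sum_sigma']
  refine Finset.sum_nbij' (fun p => ⟨p.2, p.1 - p.2⟩) (fun q => ⟨q.1 + q.2, q.1⟩) ?_ ?_ ?_ ?_ ?_
  · rintro ⟨k, i⟩ hp
    simp only [Finset.mem_sigma, Finset.mem_Icc, Finset.mem_range] at hp ⊢
    omega
  · rintro ⟨i, l⟩ hq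
    simp only [Finset.mem_sigma, Finset.mem_Icc, Finset.mem_range] at hq ⊢
    omega
  · rintro ⟨k, i⟩ hp
    simp only [Finset.mem_sigma, Finset.mem_Icc, Finset.mem_range] at hp
    show (⟨i + (k - i), i⟩ : (_ : ℕ) × ℕ) = ⟨k, i⟩
    rw [show i + (k - i) = k by omega]
  · rintro ⟨i, l⟩ hq
    simp only [Finset.mem_sigma, Finset.mem_Icc, Finset.mem_range] at hq
    show (⟨i, i + l - i⟩ : (_ : ℕ) × ℕ) = ⟨i, l⟩
    rw [show i + l - i = l by omega]
  · rintro ⟨k, i⟩ hp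
    simp only [Finset.mem_sigma, Finset.mem_Icc, Finset.mem_range] at hp
    simp only []
end

section
/- Fix target SIR Γ > 0, outage ε ∈ (0,1), path loss exponent α_c > 0, constant K > 0, powers P_c, P_f > 0, and integer T_f ≥ 1. Define D_{f,SU} = [ (K/Γ)(P_f/P_c) · ε^{1/T_f}/(1−ε^{1/T_f}) ]^{−1/α_c} and D_{f,MU} = [ (K/Γ)(P_f/(T_f P_c)) · ε/(1−ε) ]^{−1/α_c}. Then D_{f,SU}/D_{f,MU} = [ ((1−ε^{1/T_f})/ε^{1/T_f}) · (ε/(1−ε)) · (1/T_f) ]^{1/α_c}, and this ratio is strictly less than 1 for all T_f ≥ 2 and ε ∈ (0,1). -/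
/-- with
`D_{f,SU} = [(K/Γ)(P_f/P_c) ε^{1/T_f}/(1−ε^{1/T_f})]^{−1/α_c}` and
`D_{f,MU} = [(K/Γ)(P_f/(T_f P_c)) ε/(1−ε)]^{−1/α_c}`, the ratio satisfies
`D_{f,SU}/D_{f,MU} = [((1−ε^{1/T_f})/ε^{1/T_f}) (ε/(1−ε)) (1/T_f)]^{1/α_c}`,
and this ratio is `< 1` whenever `T_f ≥ 2`. -/
theorem no_coverage_radius_ratio (Γ₀ ε αc K Pc Pf : ℝ) (Tf : ℕ)
    (hΓ : 0 < Γ₀) (hε0 : 0 < ε) (hε1 : ε < 1) (hαc : 0 < αc) (hK : 0 < K)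
    (hPc : 0 < Pc) (hPf : 0 < Pf) (hTf : 1 ≤ Tf) :
    let DfSU : ℝ := ((K / Γ₀) * (Pf / Pc) * (ε ^ (1 / (Tf : ℝ)) / (1 - ε ^ (1 / (Tf : ℝ))))) ^ (-(1 / αc))
    let DfMU : ℝ := ((K / Γ₀) * (Pf / ((Tf : ℝ) * Pc)) * (ε / (1 - ε))) ^ (-(1 / αc))
    DfSU / DfMU
        = (((1 - ε ^ (1 / (Tf : ℝ))) / ε ^ (1 / (Tf : ℝ))) * (ε / (1 - ε)) * (1 / (Tf : ℝ)))
            ^ (1 / αc) ∧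
      (2 ≤ Tf → DfSU / DfMU < 1) := by
  intro DfSU DfMU
  have hTfR : (1 : ℝ) ≤ (Tf : ℝ) := by exact_mod_cast hTf
  have hTf0 : (0 : ℝ) < (Tf : ℝ) := by linarith
  set a : ℝ := ε ^ (1 / (Tf : ℝ)) with ha_def
  have ha0 : 0 < a := Real.rpow_pos_of_pos hε0 _
  have ha1 : a < 1 := Real.rpow_lt_one hε0.le hε1 (by positivity)
  have h1a : 0 < 1 - a := by linarith
  have h1ε : 0 < 1 - ε := by linarith
  have hεa : a ^ Tf = ε := by
    rw [ha_def, ← Real.rpow_natCast (ε ^ (1 / (Tf : ℝ))) Tf, ← Real.rpow_mul hε0.le]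
    rw [one_div, inv_mul_cancel₀ (ne_of_gt hTf0), Real.rpow_one]
  have hX : 0 < (K / Γ₀) * (Pf / Pc) * (a / (1 - a)) := by positivity
  have hY : 0 < (K / Γ₀) * (Pf / ((Tf : ℝ) * Pc)) * (ε / (1 - ε)) := by positivity
  set B : ℝ := ((1 - a) / a) * (ε / (1 - ε)) * (1 / (Tf : ℝ)) with hB_def
  have hB0 : 0 < B := by positivity
  have hratio : DfSU / DfMU = B ^ (1 / αc) := by
    show ((K / Γ₀) * (Pf / Pc) * (a / (1 - a))) ^ (-(1 / αc)) /
        ((K / Γ₀) * (Pf / ((Tf : ℝ) * Pc)) * (ε / (1 - ε))) ^ (-(1 / αc)) = _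
    rw [Real.rpow_neg hX.le, Real.rpow_neg hY.le, div_eq_mul_inv, inv_inv,
      ← div_eq_inv_mul, ← Real.div_rpow hY.le hX.le]
    congr 1
    rw [hB_def]
    field_simp
  refine ⟨hratio, fun h2 => ?_⟩
  have h2R : (2 : ℝ) ≤ (Tf : ℝ) := by exact_mod_cast h2
  have hpowle : a ^ Tf ≤ a := by
    calc a ^ Tf ≤ a ^ 1 := pow_le_pow_of_le_one ha0.le ha1.le hTf
    _ = a := pow_one a
  have hpow1 : a ^ Tf < 1 := pow_lt_one₀ ha0.le ha1 (by omega)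
  have hB1 : B < 1 := by
    rw [hB_def, ← hεa]
    rw [div_mul_div_comm, div_mul_div_comm, div_lt_one (by have := sub_pos.mpr hpow1; positivity)]
    nlinarith [mul_pos ha0 (sub_pos.mpr hpow1), sub_pos.mpr hpow1]
  rw [hratio]
  exact Real.rpow_lt_one hB0.le hB1 (by positivity)
end

section
/- Let Π be a homogeneous Poisson point process on ℝ² with intensity λ, and attach to each point X_j an i.i.d. mark S_j ~ Gamma(U, 1) (U a positive integer), independent of Π. For α > 2 let δ = 2/α ∈ (0,1). Then the Laplace transform of I = ∑_j (S_j/U) |X_j|^{−α} satisfies E[e^{−θI}] = exp(−λ C θ^δ) for θ > 0, where C = π δ U^{−δ} ∑_{k=0}^{U−1} C(U,k) B(k+δ, U−k−δ) and B is the Beta function. -/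
open MeasureTheory ProbabilityTheory Finset

/-- The Beta function `B(a,b) = Γ(a)Γ(b)/Γ(a+b)`. -/
noncomputable def betaFn (a b : ℝ) : ℝ := Real.Gamma a * Real.Gamma b / Real.Gamma (a + b)

section aux

open Set Real

lemma betaFn_symm (a b : ℝ) : betaFn a b = betaFn b a := by
  rw [betaFn, betaFn, add_comm, mul_comm]

lemma aux_gamma_laplace {a c : ℝ} (ha : 0 < a) (hc : 0 ≤ c) :
    ∫ s : ℝ, Real.exp (-(c * s)) ∂(gammaMeasure a 1) = (1 + c) ^ (-a) := by
  have h1c : (0:ℝ) < 1 + c := by linarith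
  have hm : Measurable fun x : ℝ => (gammaPDFReal a 1 x).toNNReal :=
    (measurable_gammaPDFReal a 1).real_toNNReal
  have hd : gammaPDF a 1 = fun x => ((gammaPDFReal a 1 x).toNNReal : ENNReal) := rfl
  rw [gammaMeasure, hd, integral_withDensity_eq_integral_smul hm]
  have h1 : ∀ x : ℝ, ((gammaPDFReal a 1 x).toNNReal : NNReal) • Real.exp (-(c * x)) =
      Set.indicator (Set.Ici 0) (fun x => (1 / Real.Gamma a) *
        (x ^ (a - 1) * Real.exp (-((1 + c) * x)))) x := by
    intro x
    rw [NNReal.smul_def, Real.coe_toNNReal _ (gammaPDFReal_nonneg ha one_pos x)]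
    by_cases hx : 0 ≤ x
    · simp only [gammaPDFReal, if_pos hx, Set.indicator_of_mem (Set.mem_Ici.mpr hx)]
      rw [one_rpow, smul_eq_mul, mul_assoc, mul_assoc, ← Real.exp_add]
      ring_nf
    · simp [gammaPDFReal, if_neg hx, Set.indicator_of_notMem (fun h => hx (Set.mem_Ici.mp h))]
  simp_rw [h1]
  rw [integral_indicator measurableSet_Ici, MeasureTheory.integral_Ici_eq_integral_Ioi,
    integral_const_mul, Real.integral_rpow_mul_exp_neg_mul_Ioi ha h1c]
  rw [Real.rpow_neg h1c.le]
  field_simp [(Real.Gamma_pos_of_pos ha).ne']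
  rw [div_rpow zero_le_one h1c.le, one_rpow]
  field_simp

lemma aux_complex_eq {a b : ℝ} {x : ℝ} (hx : 0 ≤ x) (hx1 : x ≤ 1) :
    (x : ℂ) ^ ((a : ℂ) - 1) * (1 - (x : ℂ)) ^ ((b : ℂ) - 1)
      = ((x ^ (a - 1) * (1 - x) ^ (b - 1) : ℝ) : ℂ) := by
  have h1 : ((a : ℂ) - 1) = ((a - 1 : ℝ) : ℂ) := by push_cast; ring
  have h2 : ((b : ℂ) - 1) = ((b - 1 : ℝ) : ℂ) := by push_cast; ring
  have h3 : (1 - (x : ℂ)) = ((1 - x : ℝ) : ℂ) := by push_cast; ring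
  rw [h1, h2, h3, ← Complex.ofReal_cpow hx, ← Complex.ofReal_cpow (by linarith),
    ← Complex.ofReal_mul]

lemma aux_beta_Ioo {a b : ℝ} (ha : 0 < a) (hb : 0 < b) :
    ∫ x in Set.Ioo (0:ℝ) 1, x ^ (a - 1) * (1 - x) ^ (b - 1) = betaFn a b := by
  have h := Complex.Gamma_mul_Gamma_eq_betaIntegral
    (s := (a : ℂ)) (t := (b : ℂ)) (by simpa using ha) (by simpa using hb)
  have hIcc : Complex.betaIntegral (a : ℂ) (b : ℂ)
      = ((∫ x in Set.Ioo (0:ℝ) 1, x ^ (a - 1) * (1 - x) ^ (b - 1) : ℝ) : ℂ) := by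
    rw [Complex.betaIntegral, intervalIntegral.integral_of_le zero_le_one,
      ← integral_Ioc_eq_integral_Ioo]
    refine (setIntegral_congr_fun measurableSet_Ioc
      (fun x hx => aux_complex_eq hx.1.le hx.2)).trans ?_
    exact integral_ofReal
  rw [hIcc, ← Complex.ofReal_add, Complex.Gamma_ofReal, Complex.Gamma_ofReal,
    Complex.Gamma_ofReal, ← Complex.ofReal_mul, ← Complex.ofReal_mul] at h
  have := Complex.ofReal_inj.mp h
  rw [betaFn, eq_div_iff (Real.Gamma_pos_of_pos (by linarith)).ne']
  linarith [this]

lemma aux_integrableOn_Ioo {a b : ℝ} (ha : 0 < a) (hb : 0 < b) :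
    IntegrableOn (fun x : ℝ => x ^ (a - 1) * (1 - x) ^ (b - 1)) (Set.Ioo 0 1) := by
  have h := (Complex.betaIntegral_convergent (u := (a:ℂ)) (v := (b:ℂ))
    (by simpa using ha) (by simpa using hb))
  have h2 : IntegrableOn (fun x : ℝ => (x : ℂ) ^ ((a:ℂ) - 1) * (1 - (x:ℂ)) ^ ((b:ℂ) - 1))
      (Set.Ioo 0 1) := ((intervalIntegrable_iff_integrableOn_Ioc_of_le zero_le_one).mp h).mono_set
      Set.Ioo_subset_Ioc_self
  have h3 : IntegrableOn (fun x : ℝ =>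
      Complex.re ((x : ℂ) ^ ((a:ℂ) - 1) * (1 - (x:ℂ)) ^ ((b:ℂ) - 1))) (Set.Ioo 0 1) := h2.re
  refine MeasureTheory.IntegrableOn.congr_fun h3 (fun x hx => ?_) measurableSet_Ioo
  rw [aux_complex_eq hx.1.le hx.2.le, Complex.ofReal_re]

lemma cov_deriv : ∀ x ∈ Set.Ioi (0:ℝ),
    HasDerivWithinAt (fun y : ℝ => y / (1 + y)) (((1+x)^2)⁻¹) (Ioi 0) x := by
  intro x hx
  have hx0 : 0 < x := Set.mem_Ioi.mp hx
  have h1x : (1:ℝ) + x ≠ 0 := by positivity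
  have h : HasDerivAt (fun y : ℝ => y / (1 + y)) ((1*(1+x) - x*(0+1))/(1+x)^2) x :=
    (hasDerivAt_id x).div ((hasDerivAt_const x 1).add (hasDerivAt_id x)) h1x
  have e : (1*(1+x) - x*(0+1))/(1+x)^2 = ((1+x)^2)⁻¹ := by field_simp; ring
  exact (e ▸ h).hasDerivWithinAt

lemma cov_inj : Set.InjOn (fun y : ℝ => y / (1 + y)) (Ioi 0) := by
  intro x hx y hy h
  have hx0 : 0 < x := Set.mem_Ioi.mp hx
  have hy0 : 0 < y := Set.mem_Ioi.mp hy
  have h1x : (1:ℝ) + x ≠ 0 := by positivity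
  have h1y : (1:ℝ) + y ≠ 0 := by positivity
  field_simp at h
  nlinarith

lemma cov_image : (fun y : ℝ => y / (1 + y)) '' (Set.Ioi 0) = Set.Ioo 0 1 := by
  ext t
  constructor
  · rintro ⟨x, hx, rfl⟩
    have hx0 : 0 < x := Set.mem_Ioi.mp hx
    have h1x : (0:ℝ) < 1 + x := by linarith
    exact ⟨div_pos hx0 h1x, (div_lt_one h1x).mpr (by linarith)⟩
  · rintro ⟨ht0, ht1⟩
    refine ⟨t / (1 - t), ?_, ?_⟩
    · exact Set.mem_Ioi.mpr (div_pos ht0 (by linarith))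
    · have h1t : (1:ℝ) - t ≠ 0 := by intro h; linarith [sub_eq_zero.mp h]
      show t / (1 - t) / (1 + t / (1 - t)) = t
      have h2 : 1 + t / (1 - t) = 1 / (1 - t) := by field_simp; ring
      rw [h2]
      field_simp

lemma cov_key {a b : ℝ} : ∀ x ∈ Set.Ioi (0:ℝ),
    |((1+x)^2)⁻¹| • ((x/(1+x)) ^ (a-1) * (1 - x/(1+x)) ^ (b-1))
      = x ^ (a-1) * (1+x) ^ (-(a+b)) := by
  intro x hx
  have hx0 : 0 < x := Set.mem_Ioi.mp hx
  have h1x : (0:ℝ) < 1 + x := by linarith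
  have e1 : 1 - x/(1+x) = (1+x)⁻¹ := by field_simp; ring
  rw [smul_eq_mul, abs_of_pos (by positivity), e1, div_rpow hx0.le h1x.le,
    Real.inv_rpow h1x.le]
  have e3 : (1+x) ^ (-(a+b)) = ((1+x) ^ (a-1))⁻¹ * ((1+x) ^ (b-1))⁻¹ * (((1+x)^2))⁻¹ := by
    rw [← Real.rpow_natCast (1+x) 2, ← Real.rpow_neg h1x.le, ← Real.rpow_neg h1x.le,
      ← Real.rpow_neg h1x.le, ← Real.rpow_add h1x, ← Real.rpow_add h1x]
    congr 1
    push_cast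
    ring
  rw [e3, div_eq_mul_inv]
  ring

lemma aux_beta_Ioi {a b : ℝ} (ha : 0 < a) (hb : 0 < b) :
    ∫ x in Set.Ioi (0:ℝ), x ^ (a-1) * (1+x) ^ (-(a+b)) = betaFn a b := by
  rw [← aux_beta_Ioo ha hb, ← cov_image,
    integral_image_eq_integral_abs_deriv_smul measurableSet_Ioi cov_deriv cov_inj]
  exact setIntegral_congr_fun measurableSet_Ioi (fun x hx => (cov_key x hx).symm)

lemma aux_beta_integrableOn {a b : ℝ} (ha : 0 < a) (hb : 0 < b) :
    IntegrableOn (fun x : ℝ => x ^ (a-1) * (1+x) ^ (-(a+b))) (Set.Ioi 0) := by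
  have hI := aux_integrableOn_Ioo ha hb
  rw [← cov_image] at hI
  have h2 := (integrableOn_image_iff_integrableOn_abs_deriv_smul measurableSet_Ioi cov_deriv
    cov_inj (fun x : ℝ => x ^ (a-1) * (1-x) ^ (b-1))).mp hI
  exact h2.congr_fun cov_key measurableSet_Ioi

lemma aux_vol : (volume (Metric.ball (0 : EuclideanSpace ℝ (Fin 2)) 1)).toReal = π := by
  rw [EuclideanSpace.volume_ball]
  have : (Fintype.card (Fin 2) : ℝ) / 2 + 1 = 2 := by simp; norm_num
  rw [this]
  simp [Real.Gamma_two, Real.sq_sqrt Real.pi_nonneg, Real.pi_nonneg]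

lemma aux_radial (F : ℝ → ℝ) :
    ∫ x : EuclideanSpace ℝ (Fin 2), F ‖x‖ = (2 * π) * ∫ y in Set.Ioi (0:ℝ), y * F y := by
  rw [MeasureTheory.integral_fun_norm_addHaar (volume : Measure (EuclideanSpace ℝ (Fin 2))) F]
  have hdim : Module.finrank ℝ (EuclideanSpace ℝ (Fin 2)) = 2 := by
    simp [finrank_euclideanSpace]
  rw [hdim, measureReal_def, aux_vol]
  rw [show (2:ℕ) - 1 = 1 from rfl]
  simp only [pow_one, smul_eq_mul, nsmul_eq_mul, Nat.cast_ofNat]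
  ring

end aux

/-- for a homogeneous Poisson point process on `ℝ²` of intensity
`λ` with i.i.d. `Gamma(U,1)` marks, the Laplace transform of the shot noise
`I = ∑_j (S_j/U)|X_j|^{−α}` satisfies `E[e^{−θI}] = exp(−λ C θ^δ)` with
`δ = 2/α` and `C = π δ U^{−δ} ∑_{k=0}^{U−1} C(U,k) B(k+δ, U−k−δ)`.  The Poisson
Laplace-functional (Campbell) formula
`E[e^{−θI}] = exp(−λ ∫_{ℝ²} (1 − E_S[e^{−θ(S/U)|x|^{−α}}]) dx)` is assumed as a
hypothesis (`hL`). -/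
theorem ppp_shot_noise_laplace (U : ℕ) (hU : 1 ≤ U) (α lam : ℝ) (hα : 2 < α)
    (hlam : 0 < lam) (L : ℝ → ℝ)
    (hL : ∀ θ : ℝ, 0 < θ → L θ = Real.exp (-lam *
      ∫ x : EuclideanSpace ℝ (Fin 2),
        (1 - ∫ s : ℝ, Real.exp (-θ * (s / U) * ‖x‖ ^ (-α)) ∂(gammaMeasure U 1)))) :
    ∀ θ : ℝ, 0 < θ → L θ = Real.exp (-lam *
      (Real.pi * (2 / α) * ((U : ℝ) ^ (-(2 / α))) *
        ∑ k ∈ Finset.range U, (Nat.choose U k : ℝ) *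
          betaFn ((k : ℝ) + 2 / α) ((U : ℝ) - k - 2 / α)) * θ ^ (2 / α)) := by
  intro θ hθ
  open Set Real in
  have hα0 : (0:ℝ) < α := by linarith
  have hδ0 : (0:ℝ) < 2 / α := by positivity
  have hδ1 : 2 / α < 1 := (div_lt_one hα0).mpr hα
  have hU0 : (0:ℝ) < (U:ℝ) := by exact_mod_cast hU
  have hc : (0:ℝ) < θ / U := div_pos hθ hU0
  set F : ℝ → ℝ := fun r =>
    1 - ∫ s : ℝ, Real.exp (-θ * (s / U) * r ^ (-α)) ∂(gammaMeasure U 1) with hF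
  -- Step 2 : value of F on positive reals
  have h2 : ∀ y ∈ Ioi (0:ℝ), y * F y
      = y * (1 - (1 + (θ/U) * y ^ (-α)) ^ (-(U:ℝ))) := by
    intro y hy
    have hy0 : 0 < y := hy
    have hcc : (0:ℝ) ≤ θ/U * y ^ (-α) := by positivity
    have hg := aux_gamma_laplace (a := (U:ℝ)) hU0 hcc
    have hfun : (fun s : ℝ => Real.exp (-θ * (s / U) * y ^ (-α)))
        = fun s : ℝ => Real.exp (-(θ/U * y ^ (-α) * s)) := by
      funext s
      congr 1
      ring
    rw [hF]
    simp only [hfun, hg]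
  -- Step 1 : radial reduction
  have h1 : (∫ x : EuclideanSpace ℝ (Fin 2),
        (1 - ∫ s : ℝ, Real.exp (-θ * (s / U) * ‖x‖ ^ (-α)) ∂(gammaMeasure U 1)))
      = (2 * π) * ∫ y in Ioi (0:ℝ), y * (1 - (1 + (θ/U) * y ^ (-α)) ^ (-(U:ℝ))) := by
    rw [show (∫ x : EuclideanSpace ℝ (Fin 2),
        (1 - ∫ s : ℝ, Real.exp (-θ * (s / U) * ‖x‖ ^ (-α)) ∂(gammaMeasure U 1)))
      = ∫ x : EuclideanSpace ℝ (Fin 2), F ‖x‖ from rfl, aux_radial F]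
    rw [setIntegral_congr_fun measurableSet_Ioi h2]
  -- Step 3 : substitution y = x ^ (-α)
  set g : ℝ → ℝ := fun u =>
    (1/α) * (u ^ (-(2/α) - 1) * (1 - (1 + (θ/U) * u) ^ (-(U:ℝ)))) with hg
  have h3 := integral_comp_rpow_Ioi g (p := -α) (by simpa using hα0.ne')
  have h3pt : ∀ x ∈ Set.Ioi (0:ℝ),
      (|(-α)| * x ^ (-α - 1)) • g (x ^ (-α))
        = x * (1 - (1 + (θ/U) * x ^ (-α)) ^ (-(U:ℝ))) := by
    intro x hx
    have hx0 : 0 < x := hx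
    rw [smul_eq_mul, hg]
    simp only []
    rw [← Real.rpow_mul hx0.le (-α) (-(2/α) - 1)]
    rw [show (-α) * (-(2/α) - 1) = 2 + α by field_simp; ring]
    rw [abs_neg, abs_of_pos hα0]
    have hxx : x ^ (-α - 1) * x ^ (2 + α) = x := by
      rw [← Real.rpow_add hx0, show -α - 1 + (2 + α) = 1 by ring, Real.rpow_one]
    calc α * x ^ (-α - 1) * ((1/α) *
          (x ^ (2 + α) * (1 - (1 + θ/U * x ^ (-α)) ^ (-(U:ℝ)))))
        = (α * (1/α)) * ((x ^ (-α - 1) * x ^ (2 + α)) *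
            (1 - (1 + θ/U * x ^ (-α)) ^ (-(U:ℝ)))) := by ring
      _ = _ := by rw [hxx, mul_one_div, div_self hα0.ne', one_mul]
  have h3' : (∫ y in Ioi (0:ℝ), y * (1 - (1 + (θ/U) * y ^ (-α)) ^ (-(U:ℝ))))
      = ∫ u in Ioi (0:ℝ), g u := by
    rw [← h3]
    exact (setIntegral_congr_fun measurableSet_Ioi h3pt).symm
  -- Step 4 : pull out 1/α
  have h4 : (∫ u in Ioi (0:ℝ), g u)
      = (1/α) * ∫ u in Ioi (0:ℝ),
          u ^ (-(2/α) - 1) * (1 - (1 + (θ/U) * u) ^ (-(U:ℝ))) := by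
    rw [hg]
    exact integral_const_mul _ _
  -- Step 5 : scaling u = v / (θ/U)
  have h5 : (∫ u in Ioi (0:ℝ), u ^ (-(2/α) - 1) * (1 - (1 + (θ/U) * u) ^ (-(U:ℝ))))
      = (θ/U) ^ (2/α) * ∫ v in Ioi (0:ℝ),
          v ^ (-(2/α) - 1) * (1 - (1 + v) ^ (-(U:ℝ))) := by
    have hscale := integral_comp_mul_left_Ioi
      (fun v => v ^ (-(2/α) - 1) * (1 - (1 + v) ^ (-(U:ℝ)))) 0 hc
    rw [mul_zero] at hscale
    have hpt : ∀ u ∈ Ioi (0:ℝ),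
        u ^ (-(2/α) - 1) * (1 - (1 + (θ/U) * u) ^ (-(U:ℝ)))
          = (θ/U) ^ (2/α + 1) * (((θ/U) * u) ^ (-(2/α) - 1)
              * (1 - (1 + (θ/U) * u) ^ (-(U:ℝ)))) := by
      intro u hu
      have hu0 : 0 < u := hu
      rw [Real.mul_rpow hc.le hu0.le, ← mul_assoc, ← mul_assoc,
        ← Real.rpow_add hc]
      norm_num
    rw [setIntegral_congr_fun measurableSet_Ioi hpt, integral_const_mul, hscale,
      smul_eq_mul, ← mul_assoc, ← Real.rpow_neg_one (θ/U), ← Real.rpow_add hc]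
    norm_num
  -- Step 6 : binomial expansion and beta integrals
  have h6 : (∫ v in Ioi (0:ℝ), v ^ (-(2/α) - 1) * (1 - (1 + v) ^ (-(U:ℝ))))
      = ∑ k ∈ Finset.range U, (Nat.choose U k : ℝ) *
          betaFn ((k : ℝ) + 2 / α) ((U : ℝ) - k - 2 / α) := by
    have hsum : ∀ v ∈ Ioi (0:ℝ), v ^ (-(2/α) - 1) * (1 - (1 + v) ^ (-(U:ℝ)))
        = ∑ k ∈ Finset.range U, (Nat.choose U k : ℝ) *
            (v ^ ((((U:ℝ) - k - 2/α)) - 1)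
              * (1 + v) ^ (-((((U:ℝ) - k - 2/α)) + ((k:ℝ) + 2/α)))) := by
      intro v hv
      have hv0 : 0 < v := hv
      have h1v : (0:ℝ) < 1 + v := by linarith
      have hpow : (1+v) ^ ((U:ℝ)) = (1+v) ^ (U:ℕ) := Real.rpow_natCast _ U
      have hbin : (1+v) ^ (U:ℕ) - 1
          = ∑ k ∈ Finset.range U, (Nat.choose U k : ℝ) * v ^ (U - k : ℕ) := by
        have h := add_pow (1:ℝ) v U
        simp only [one_pow, one_mul] at h
        rw [Finset.sum_range_succ] at h
        simp only [Nat.sub_self, pow_zero, Nat.choose_self, Nat.cast_one, mul_one, one_mul] at h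
        rw [h, add_sub_cancel_right]
        exact Finset.sum_congr rfl (fun k hk => by ring)
      have key : 1 - (1+v) ^ (-(U:ℝ)) = ((1+v) ^ (U:ℕ) - 1) * (1+v) ^ (-(U:ℝ)) := by
        rw [sub_mul, ← hpow, ← Real.rpow_add h1v]
        simp
      rw [key, hbin, Finset.sum_mul, Finset.mul_sum]
      refine Finset.sum_congr rfl (fun k hk => ?_)
      have hkU : k < U := Finset.mem_range.mp hk
      have hcast : ((U - k : ℕ) : ℝ) = (U:ℝ) - k := by rw [Nat.cast_sub hkU.le]
      have hexp : v ^ (-(2/α) - 1) * v ^ (U - k : ℕ) = v ^ (((U:ℝ) - k - 2/α) - 1) := by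
        rw [← Real.rpow_natCast v (U - k), ← Real.rpow_add hv0, hcast]
        congr 1
        ring
      have harg : -(((U:ℝ) - k - 2/α) + ((k:ℝ) + 2/α)) = -(U:ℝ) := by ring
      rw [harg]
      calc v ^ (-(2/α) - 1) * ((Nat.choose U k : ℝ) * v ^ (U - k : ℕ) * (1+v) ^ (-(U:ℝ)))
          = (Nat.choose U k : ℝ) * ((v ^ (-(2/α) - 1) * v ^ (U - k : ℕ))
              * (1+v) ^ (-(U:ℝ))) := by ring
        _ = _ := by rw [hexp]
    have hapos : ∀ k ∈ Finset.range U, (0:ℝ) < (U:ℝ) - k - 2/α := by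
      intro k hk
      have hkU : k < U := Finset.mem_range.mp hk
      have : (k:ℝ) + 1 ≤ (U:ℝ) := by exact_mod_cast hkU
      linarith
    have hbpos : ∀ k : ℕ, (0:ℝ) < (k:ℝ) + 2/α := fun k => by positivity
    rw [setIntegral_congr_fun measurableSet_Ioi hsum,
      integral_finset_sum _ (fun k hk => ?_)]
    · refine Finset.sum_congr rfl (fun k hk => ?_)
      rw [integral_const_mul, aux_beta_Ioi (hapos k hk) (hbpos k),
        betaFn_symm]
    · exact ((aux_beta_integrableOn (hapos k hk) (hbpos k)).const_mul _)
  rw [hL θ hθ, h1, h3', h4, h5, h6]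
  congr 1
  have hdiv : (θ/U) ^ (2/α) = θ ^ (2/α) * (U:ℝ) ^ (-(2/α)) := by
    rw [Real.div_rpow hθ.le hU0.le, Real.rpow_neg hU0.le, div_eq_mul_inv]
  rw [hdiv]
  ring
end

section
/- Let S ~ Gamma(U,1) with U a positive integer, α > 2, δ = 2/α, and θ > 0. Then ∫_{ℝ²} (1 − E[e^{−θ(S/U)|x|^{−α}}]) dx = π δ (θ/U)^δ ∑_{k=0}^{U−1} C(U,k) B(k+δ, U−k−δ), where B is the Beta function and C(U,k) the binomial coefficient. -/
open MeasureTheory ProbabilityTheory Finset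

open Real Set
open scoped ENNReal NNReal

lemma betaIntegrableOn_Ioo {a b : ℝ} (ha : 0 < a) (hb : 0 < b) :
    IntegrableOn (fun x : ℝ => x ^ (a - 1) * (1 - x) ^ (b - 1)) (Ioo 0 1) := by
  have hc : IntegrableOn (fun x : ℝ => (x : ℂ) ^ ((a : ℂ) - 1) * ((1 : ℂ) - x) ^ ((b : ℂ) - 1))
      (Ioc 0 1) := by
    have := Complex.betaIntegral_convergent (u := (a : ℂ)) (v := (b : ℂ)) (by simpa) (by simpa)
    simpa [intervalIntegrable_iff, uIoc_of_le (zero_le_one' ℝ)] using this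
  have hre : IntegrableOn (fun x : ℝ =>
      ((x : ℂ) ^ ((a : ℂ) - 1) * ((1 : ℂ) - x) ^ ((b : ℂ) - 1)).re) (Ioc 0 1) := hc.re
  refine ((hre.mono_set Ioo_subset_Ioc_self)).congr_fun (fun x hx => ?_) measurableSet_Ioo
  obtain ⟨h0, h1⟩ := hx
  dsimp only
  rw [show ((a:ℂ)-1) = ((a-1:ℝ):ℂ) by push_cast; ring,
    show ((b:ℂ)-1) = ((b-1:ℝ):ℂ) by push_cast; ring,
    show ((1:ℂ) - (x:ℂ)) = ((1 - x : ℝ) : ℂ) by push_cast; ring,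
    ← Complex.ofReal_cpow h0.le, ← Complex.ofReal_cpow (by linarith), ← Complex.ofReal_mul,
    Complex.ofReal_re]

lemma betaIntegral_Ioo {a b : ℝ} (ha : 0 < a) (hb : 0 < b) :
    ∫ x in Ioo (0:ℝ) 1, x ^ (a - 1) * (1 - x) ^ (b - 1) = betaFn a b := by
  have hab : (0:ℝ) < a + b := by linarith
  have key := Complex.Gamma_mul_Gamma_eq_betaIntegral (s := (a : ℂ)) (t := (b : ℂ))
    (by simpa) (by simpa)
  have hbeta : Complex.betaIntegral (a:ℂ) (b:ℂ)
      = ((∫ x in Ioo (0:ℝ) 1, x ^ (a - 1) * (1 - x) ^ (b - 1) : ℝ) : ℂ) := by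
    rw [Complex.betaIntegral, intervalIntegral.integral_of_le (zero_le_one' ℝ),
      integral_Ioc_eq_integral_Ioo]
    have : ∫ (t : ℝ) in Ioo (0:ℝ) 1, (t:ℂ) ^ ((a:ℂ) - 1) * (1 - (t:ℂ)) ^ ((b:ℂ) - 1)
        = ∫ (t : ℝ) in Ioo (0:ℝ) 1, ((t ^ (a - 1) * (1 - t) ^ (b - 1) : ℝ) : ℂ) := by
      refine setIntegral_congr_fun measurableSet_Ioo (fun x hx => ?_)
      obtain ⟨h0, h1⟩ := hx
      rw [show ((a:ℂ)-1) = ((a-1:ℝ):ℂ) by push_cast; ring,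
        show ((b:ℂ)-1) = ((b-1:ℝ):ℂ) by push_cast; ring,
        show ((1:ℂ) - (x:ℂ)) = ((1 - x : ℝ) : ℂ) by push_cast; ring,
        ← Complex.ofReal_cpow h0.le, ← Complex.ofReal_cpow (by linarith), ← Complex.ofReal_mul]
    rw [this]
    exact integral_ofReal
  rw [hbeta] at key
  rw [show ((a:ℂ) + (b:ℂ)) = ((a + b : ℝ) : ℂ) by push_cast; ring] at key
  rw [Complex.Gamma_ofReal, Complex.Gamma_ofReal, Complex.Gamma_ofReal, ← Complex.ofReal_mul,
    ← Complex.ofReal_mul] at key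
  have := Complex.ofReal_inj.mp key
  have hΓ : Real.Gamma (a + b) ≠ 0 := (Real.Gamma_pos_of_pos hab).ne'
  rw [betaFn, eq_div_iff hΓ]
  linarith [this]

section BetaIoi

variable {a b : ℝ}

private lemma hasDeriv_sub (x : ℝ) (hx : x ∈ Ioo (0:ℝ) 1) :
    HasDerivWithinAt (fun x : ℝ => x / (1 - x)) (((1 - x) ^ 2)⁻¹) (Ioo (0:ℝ) 1) x := by
  obtain ⟨h0, h1⟩ := hx
  have hne : (1 - x) ≠ 0 := by linarith
  have := (hasDerivAt_id x).div ((hasDerivAt_id x).const_sub 1) hne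
  refine this.hasDerivWithinAt.congr_deriv ?_
  simp only [id]; ring

private lemma injOn_sub : InjOn (fun x : ℝ => x / (1 - x)) (Ioo (0:ℝ) 1) := by
  intro x hx y hy hxy
  have hx1 : (1:ℝ) - x ≠ 0 := by have := hx.2; intro h; linarith
  have hy1 : (1:ℝ) - y ≠ 0 := by have := hy.2; intro h; linarith
  field_simp at hxy
  ring_nf at hxy
  nlinarith [hxy]

private lemma image_sub : (fun x : ℝ => x / (1 - x)) '' (Ioo (0:ℝ) 1) = Ioi (0:ℝ) := by
  ext u
  simp only [Set.mem_image, Set.mem_Ioo, Set.mem_Ioi]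
  constructor
  · rintro ⟨x, ⟨h0, h1⟩, rfl⟩
    exact div_pos h0 (by linarith)
  · intro hu
    have hu' : (0:ℝ) < u := hu
    refine ⟨u / (1 + u), ⟨div_pos hu' (by linarith), ?_⟩, ?_⟩
    · rw [div_lt_one (by linarith)]; linarith
    · have h1u : (1:ℝ) + u ≠ 0 := by positivity
      field_simp; ring

private lemma pt_sub (ha : 0 < a) (hb : 0 < b) (x : ℝ) (hx : x ∈ Ioo (0:ℝ) 1) :
    |((1 - x) ^ 2)⁻¹| • ((x / (1 - x)) ^ (a - 1) * (1 + x / (1 - x)) ^ (-(a + b)))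
      = x ^ (a - 1) * (1 - x) ^ (b - 1) := by
  obtain ⟨h0, h1⟩ := hx
  have hx1 : (0:ℝ) < 1 - x := by linarith
  have e1 : (1:ℝ) + x / (1 - x) = (1 - x)⁻¹ := by field_simp; ring
  rw [e1, Real.div_rpow h0.le hx1.le, Real.inv_rpow hx1.le, ← Real.rpow_neg hx1.le, neg_neg,
    abs_of_pos (by positivity), smul_eq_mul]
  rw [div_eq_mul_inv, ← Real.rpow_neg hx1.le,
    show ((1 - x) ^ 2)⁻¹ = (1-x) ^ (-2:ℝ) by
      rw [← Real.rpow_natCast (1-x) 2, ← Real.rpow_neg hx1.le]; norm_num]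
  have hsplit : (1-x) ^ (b-1) = (1-x) ^ (-2:ℝ) * ((1-x) ^ (-(a-1)) * (1-x) ^ (a+b)) := by
    rw [← Real.rpow_add hx1, ← Real.rpow_add hx1]; congr 1; ring
  rw [hsplit]; ring

lemma betaIntegrableOn_Ioi (ha : 0 < a) (hb : 0 < b) :
    IntegrableOn (fun u : ℝ => u ^ (a - 1) * (1 + u) ^ (-(a + b))) (Ioi 0) := by
  have h := (integrableOn_image_iff_integrableOn_abs_deriv_smul measurableSet_Ioo
    hasDeriv_sub injOn_sub (fun u : ℝ => u ^ (a - 1) * (1 + u) ^ (-(a + b))))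
  rw [image_sub] at h
  rw [h]
  exact (betaIntegrableOn_Ioo ha hb).congr_fun
    (fun x hx => (pt_sub ha hb x hx).symm) measurableSet_Ioo

lemma betaIntegral_Ioi (ha : 0 < a) (hb : 0 < b) :
    ∫ u in Ioi (0:ℝ), u ^ (a - 1) * (1 + u) ^ (-(a + b)) = betaFn a b := by
  have h := integral_image_eq_integral_abs_deriv_smul measurableSet_Ioo
    hasDeriv_sub injOn_sub (fun u : ℝ => u ^ (a - 1) * (1 + u) ^ (-(a + b)))
  rw [image_sub] at h
  rw [h, setIntegral_congr_fun measurableSet_Ioo (pt_sub ha hb), betaIntegral_Ioo ha hb]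

end BetaIoi

lemma gamma_laplace (U : ℕ) (hU : 1 ≤ U) {c : ℝ} (hc : 0 ≤ c) :
    ∫ s : ℝ, Real.exp (-(c * s)) ∂(gammaMeasure U 1) = (1 + c) ^ (-(U:ℝ)) := by
  have hU0 : (0:ℝ) < U := by exact_mod_cast Nat.lt_of_lt_of_le Nat.zero_lt_one hU
  have hΓ : (0:ℝ) < Real.Gamma U := Real.Gamma_pos_of_pos hU0
  rw [gammaMeasure]
  rw [show gammaPDF (U:ℝ) 1 = fun x => ((gammaPDFReal (U:ℝ) 1 x).toNNReal : ℝ≥0∞) from rfl]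
  rw [integral_withDensity_eq_integral_smul ((measurable_gammaPDFReal _ _).real_toNNReal) _]
  have step1 : ∫ s : ℝ, (gammaPDFReal (U:ℝ) 1 s).toNNReal • Real.exp (-(c * s))
      = ∫ s in Ioi (0:ℝ), (gammaPDFReal (U:ℝ) 1 s).toNNReal • Real.exp (-(c * s)) := by
    rw [← integral_indicator measurableSet_Ioi]
    refine integral_congr_ae ?_
    have h0 : ∀ᵐ (x : ℝ), x ≠ 0 := by
      rw [ae_iff]
      simpa using Real.volume_singleton (a := 0)
    filter_upwards [h0] with x hx
    rcases lt_or_gt_of_ne hx with h | h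
    · simp only [indicator_apply, Set.mem_Ioi, if_neg (not_lt.mpr h.le)]
      simp [gammaPDFReal, if_neg (not_le.mpr h)]
    · simp [indicator_apply, Set.mem_Ioi, if_pos h]
  rw [step1]
  have step2 : ∀ x ∈ Ioi (0:ℝ), (gammaPDFReal (U:ℝ) 1 x).toNNReal • Real.exp (-(c * x))
      = (Real.Gamma U)⁻¹ * (x ^ ((U:ℝ) - 1) * Real.exp (-(1+c) * x ^ (1:ℝ))) := by
    intro x hx
    have hx' : (0:ℝ) < x := hx
    rw [NNReal.smul_def, Real.coe_toNNReal _ (gammaPDFReal_nonneg hU0 one_pos x),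
      gammaPDFReal, if_pos hx'.le]
    rw [Real.one_rpow, one_mul, smul_eq_mul, mul_assoc, ← Real.exp_add, Real.rpow_one,
      show -x + -(c * x) = -(1+c) * x by ring, one_div]
    ring
  rw [setIntegral_congr_fun measurableSet_Ioi step2, integral_const_mul,
    integral_rpow_mul_exp_neg_mul_rpow one_pos (by linarith) (by linarith : (0:ℝ) < 1 + c)]
  rw [sub_add_cancel, div_one, div_one]
  field_simp

lemma Tk_integrable {α c : ℝ} (hα : 2 < α) (hc : 0 < c) {U k : ℕ} (hk : k < U) :
    IntegrableOn (fun y : ℝ => y ^ (α*(k:ℝ)+1) * (y^α + c) ^ (-(U:ℝ))) (Ioi 0) := by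
  have hα0 : (0:ℝ) < α := by linarith
  have hmeas : Measurable (fun y : ℝ => y ^ (α*(k:ℝ)+1) * (y^α + c) ^ (-(U:ℝ))) := by fun_prop
  have hsplit : Set.Ioc (0:ℝ) 1 ∪ Set.Ioi (1:ℝ) = Set.Ioi (0:ℝ) := Set.Ioc_union_Ioi_eq_Ioi zero_le_one
  rw [← hsplit]
  refine IntegrableOn.union ?_ ?_
  · refine Measure.integrableOn_of_bounded (M := c ^ (-(U:ℝ))) (by simp) hmeas.aestronglyMeasurable ?_
    · refine ae_restrict_of_forall_mem measurableSet_Ioc (fun y hy => ?_)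
      obtain ⟨h0, h1⟩ := hy
      have hb1 : y ^ (α*(k:ℝ)+1) ≤ 1 :=
        Real.rpow_le_one h0.le h1 (by positivity)
      have hb2 : (y^α + c) ^ (-(U:ℝ)) ≤ c ^ (-(U:ℝ)) :=
        Real.rpow_le_rpow_of_nonpos hc
          (le_add_of_nonneg_left (Real.rpow_nonneg h0.le α)) (by simp)
      rw [Real.norm_eq_abs, abs_of_nonneg (by positivity)]
      calc y ^ (α*(k:ℝ)+1) * (y^α + c) ^ (-(U:ℝ))
          ≤ 1 * c ^ (-(U:ℝ)) := by
            exact mul_le_mul hb1 hb2 (Real.rpow_nonneg (by positivity) _) zero_le_one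
        _ = c ^ (-(U:ℝ)) := one_mul _
  · have he : α*(k:ℝ)+1 + α * (-(U:ℝ)) < -1 := by
      have hkU : (k:ℝ) + 1 ≤ (U:ℝ) := by exact_mod_cast hk
      nlinarith
    refine Integrable.mono' (g := fun y : ℝ => y ^ (α*(k:ℝ)+1 + α * (-(U:ℝ))))
      (integrableOn_Ioi_rpow_of_lt he zero_lt_one) hmeas.aestronglyMeasurable ?_
    refine ae_restrict_of_forall_mem measurableSet_Ioi (fun y hy => ?_)
    have h1 : (1:ℝ) < y := hy
    have h0 : (0:ℝ) < y := lt_trans zero_lt_one h1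
    rw [Real.norm_eq_abs, abs_of_nonneg (by positivity)]
    have hb2 : (y^α + c) ^ (-(U:ℝ)) ≤ (y^α) ^ (-(U:ℝ)) :=
      Real.rpow_le_rpow_of_nonpos (by positivity) (le_add_of_nonneg_right hc.le) (by simp)
    calc y ^ (α*(k:ℝ)+1) * (y^α + c) ^ (-(U:ℝ))
        ≤ y ^ (α*(k:ℝ)+1) * (y^α) ^ (-(U:ℝ)) :=
          mul_le_mul_of_nonneg_left hb2 (Real.rpow_nonneg h0.le _)
      _ = y ^ (α*(k:ℝ)+1 + α * (-(U:ℝ))) := by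
          rw [← Real.rpow_mul h0.le, ← Real.rpow_add h0]

lemma Tk_eval {α c : ℝ} (hα : 2 < α) (hc : 0 < c) {U k : ℕ} (hk : k < U) :
    ∫ y in Ioi (0:ℝ), y ^ (α*(k:ℝ)+1) * (y^α + c) ^ (-(U:ℝ))
      = (1/α) * c ^ ((k:ℝ) + 2/α - U) * betaFn ((k:ℝ) + 2/α) ((U:ℝ) - (k:ℝ) - 2/α) := by
  have hα0 : (0:ℝ) < α := by linarith
  set a : ℝ := (k:ℝ) + 2/α with ha_def
  set b : ℝ := (U:ℝ) - (k:ℝ) - 2/α with hb_def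
  have hkU : (k:ℝ) + 1 ≤ (U:ℝ) := by exact_mod_cast hk
  have h2α : 2/α < 1 := by rw [div_lt_one hα0]; linarith
  have ha : 0 < a := by positivity
  have hb : 0 < b := by simp only [hb_def]; linarith
  have hab : a + b = (U:ℝ) := by simp only [ha_def, hb_def]; ring
  set g : ℝ → ℝ := fun t => t ^ (a - 1) * (t + c) ^ (-(U:ℝ)) with hg_def
  have step1 : ∫ y in Ioi (0:ℝ), (α * y ^ (α - 1)) • g (y^α) = ∫ t in Ioi (0:ℝ), g t :=
    integral_comp_rpow_Ioi_of_pos hα0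
  have step1' : ∀ y ∈ Ioi (0:ℝ), (α * y ^ (α - 1)) • g (y^α)
      = α * (y ^ (α*(k:ℝ)+1) * (y^α + c) ^ (-(U:ℝ))) := by
    intro y hy
    have h0 : (0:ℝ) < y := hy
    have e1 : (y^α) ^ (a - 1) = y ^ (α * (a-1)) := by
      rw [← Real.rpow_mul h0.le, mul_comm]
    have e2 : α * (a - 1) = α*(k:ℝ) + 2 - α := by
      simp only [ha_def]; field_simp
    rw [smul_eq_mul]
    simp only [hg_def]
    rw [e1, e2, ← mul_assoc, mul_assoc α, ← Real.rpow_add h0]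
    rw [show α - 1 + (α*(k:ℝ) + 2 - α) = α*(k:ℝ)+1 by ring]
    ring
  have hmain : α * ∫ y in Ioi (0:ℝ), y ^ (α*(k:ℝ)+1) * (y^α + c) ^ (-(U:ℝ))
      = ∫ t in Ioi (0:ℝ), g t := by
    rw [← integral_const_mul, ← step1, setIntegral_congr_fun measurableSet_Ioi step1']
  have step2 : ∫ t in Ioi (0:ℝ), g t = c • ∫ x in Ioi (0:ℝ), g (c * x) := by
    rw [integral_comp_mul_left_Ioi g 0 hc, mul_zero, smul_smul,
      mul_inv_cancel₀ hc.ne', one_smul]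
  have step2' : ∀ x ∈ Ioi (0:ℝ), g (c * x)
      = (c ^ (a - 1) * c ^ (-(U:ℝ))) * (x ^ (a - 1) * (1 + x) ^ (-(a+b))) := by
    intro x hx
    have h0 : (0:ℝ) < x := hx
    have e1 : c * x + c = c * (1 + x) := by ring
    simp only [hg_def]
    rw [e1, Real.mul_rpow hc.le h0.le, Real.mul_rpow hc.le (by linarith), hab]
    ring
  have hbeta := betaIntegral_Ioi ha hb
  rw [step2, setIntegral_congr_fun measurableSet_Ioi step2', integral_const_mul, hbeta,
    smul_eq_mul] at hmain
  have : ∫ y in Ioi (0:ℝ), y ^ (α*(k:ℝ)+1) * (y^α + c) ^ (-(U:ℝ))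
      = α⁻¹ * (c * (c ^ (a - 1) * c ^ (-(U:ℝ)) * betaFn a b)) := by
    rw [← hmain]; field_simp
  rw [this]
  have e3 : c * (c ^ (a - 1) * c ^ (-(U:ℝ))) = c ^ (a - (U:ℝ)) := by
    rw [← Real.rpow_add hc, show a - (U:ℝ) = (a - 1 + -(U:ℝ)) + 1 by ring,
      Real.rpow_add_one hc.ne']
    ring
  rw [show c * (c ^ (a - 1) * c ^ (-(U:ℝ)) * betaFn a b)
      = c * (c ^ (a - 1) * c ^ (-(U:ℝ))) * betaFn a b by ring, e3]
  rw [show a - (U:ℝ) = (k:ℝ) + 2/α - U by rw [ha_def]]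
  ring

lemma pointwise_expand (U : ℕ) (hU : 1 ≤ U) {α θ : ℝ} (hα : 2 < α) (hθ : 0 < θ)
    {y : ℝ} (hy : 0 < y) :
    y • (1 - ∫ s : ℝ, Real.exp (-θ * (s / U) * y ^ (-α)) ∂(gammaMeasure U 1))
      = ∑ k ∈ Finset.range U, ((Nat.choose U k : ℝ) * (θ/U) ^ ((U:ℝ) - (k:ℝ))) *
          (y ^ (α*(k:ℝ)+1) * (y^α + θ/U) ^ (-(U:ℝ))) := by
  have hU0 : (0:ℝ) < U := by exact_mod_cast Nat.lt_of_lt_of_le Nat.zero_lt_one hU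
  set c : ℝ := θ / U with hc_def
  have hc : 0 < c := div_pos hθ hU0
  have e0 : (fun s : ℝ => Real.exp (-θ * (s / U) * y ^ (-α)))
      = fun s : ℝ => Real.exp (-((c * y ^ (-α)) * s)) := by
    funext s; congr 1; rw [hc_def]; ring
  rw [e0, gamma_laplace U hU (by positivity)]
  -- now algebra
  set t : ℝ := y ^ α with ht_def
  have ht : 0 < t := Real.rpow_pos_of_pos hy α
  have hyneg : y ^ (-α) = t⁻¹ := by rw [ht_def, ← Real.rpow_neg hy.le, Real.rpow_neg hy.le]
  have e1 : 1 + c * y ^ (-α) = (t + c) / t := by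
    rw [hyneg]; field_simp
  have htc : 0 < t + c := by positivity
  have e2 : ((t + c) / t) ^ (-(U:ℝ)) = (t ^ U : ℝ) / (t + c) ^ U := by
    rw [Real.rpow_neg (div_nonneg htc.le ht.le), Real.rpow_natCast, div_pow, inv_div]
  rw [e1, e2]
  have e3 : y • (1 - (t ^ U : ℝ) / (t + c) ^ U) = y * (((t+c)^U - t^U) / (t+c)^U) := by
    rw [smul_eq_mul]
    congr 1
    field_simp
  rw [e3]
  have e4 : (t+c)^U - t^U = ∑ k ∈ Finset.range U, t^k * c^(U-k) * (Nat.choose U k : ℝ) := by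
    rw [add_pow, Finset.sum_range_succ]
    simp
  rw [e4, Finset.sum_div, Finset.mul_sum]
  refine Finset.sum_congr rfl (fun k hk => ?_)
  have hkU : k ≤ U := le_of_lt (Finset.mem_range.mp hk)
  have ec : (c:ℝ)^(U-k) = c ^ ((U:ℝ) - (k:ℝ)) := by
    rw [← Real.rpow_natCast c (U-k), Nat.cast_sub hkU]
  have ety : y * t^k = y ^ (α*(k:ℝ)+1) := by
    rw [ht_def, ← Real.rpow_natCast (y ^ α) k, ← Real.rpow_mul hy.le,
      show y * y ^ (α * (k:ℝ)) = y ^ (1:ℝ) * y ^ (α * (k:ℝ)) by rw [Real.rpow_one],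
      ← Real.rpow_add hy]
    ring_nf
  have etc : ((t+c)^U : ℝ)⁻¹ = (t + c) ^ (-(U:ℝ)) := by
    rw [← Real.rpow_natCast (t+c) U, ← Real.rpow_neg htc.le]
  calc y * (t^k * c^(U-k) * (Nat.choose U k : ℝ) / (t+c)^U)
      = (Nat.choose U k : ℝ) * c^(U-k) * ((y * t^k) * ((t+c)^U : ℝ)⁻¹) := by ring
    _ = _ := by rw [ec, ety, etc]

lemma radial_eval (U : ℕ) (hU : 1 ≤ U) {α θ : ℝ} (hα : 2 < α) (hθ : 0 < θ) :
    ∫ y in Ioi (0:ℝ),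
        y • (1 - ∫ s : ℝ, Real.exp (-θ * (s / U) * y ^ (-α)) ∂(gammaMeasure U 1))
      = (1/α) * (θ/U) ^ ((2:ℝ)/α) * ∑ k ∈ Finset.range U, (Nat.choose U k : ℝ) *
          betaFn ((k : ℝ) + 2 / α) ((U : ℝ) - k - 2 / α) := by
  have hU0 : (0:ℝ) < U := by exact_mod_cast Nat.lt_of_lt_of_le Nat.zero_lt_one hU
  have hc : 0 < θ / U := div_pos hθ hU0
  rw [setIntegral_congr_fun measurableSet_Ioi
    (fun y hy => pointwise_expand U hU hα hθ (Set.mem_Ioi.mp hy))]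
  rw [integral_finset_sum _
    (fun k hk => (Tk_integrable hα hc (Finset.mem_range.mp hk)).const_mul _)]
  rw [Finset.mul_sum]
  refine Finset.sum_congr rfl (fun k hk => ?_)
  have hcomb : (θ/(U:ℝ)) ^ ((U:ℝ) - (k:ℝ)) * (θ/(U:ℝ)) ^ ((k:ℝ) + 2/α - (U:ℝ))
      = (θ/(U:ℝ)) ^ ((2:ℝ)/α) := by
    rw [← Real.rpow_add hc]; congr 1; ring
  rw [integral_const_mul, Tk_eval hα hc (Finset.mem_range.mp hk), ← hcomb]
  ring

/-- for `S ~ Gamma(U,1)` (`U` a positive integer), `α > 2`,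
`δ = 2/α`, `θ > 0`,
`∫_{ℝ²} (1 − E[e^{−θ(S/U)|x|^{−α}}]) dx
  = π δ (θ/U)^δ ∑_{k=0}^{U−1} C(U,k) B(k+δ, U−k−δ)`. -/
theorem shot_noise_integral (U : ℕ) (hU : 1 ≤ U) (α θ : ℝ) (hα : 2 < α) (hθ : 0 < θ) :
    ∫ x : EuclideanSpace ℝ (Fin 2),
        (1 - ∫ s : ℝ, Real.exp (-θ * (s / U) * ‖x‖ ^ (-α)) ∂(gammaMeasure U 1))
      = Real.pi * (2 / α) * (θ / U) ^ (2 / α) *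
          ∑ k ∈ Finset.range U, (Nat.choose U k : ℝ) *
            betaFn ((k : ℝ) + 2 / α) ((U : ℝ) - k - 2 / α) := by
  have hα0 : (0:ℝ) < α := by linarith
  set f : ℝ → ℝ :=
    fun t => 1 - ∫ s : ℝ, Real.exp (-θ * (s / U) * t ^ (-α)) ∂(gammaMeasure U 1) with hf_def
  have h := MeasureTheory.integral_fun_norm_addHaar
    (volume : Measure (EuclideanSpace ℝ (Fin 2))) f
  simp only [finrank_euclideanSpace_fin] at h
  have hball : (volume (Metric.ball (0:EuclideanSpace ℝ (Fin 2)) 1)).toReal = Real.pi := by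
    rw [EuclideanSpace.volume_ball]
    norm_num [Fintype.card_fin, Real.Gamma_two, Real.sq_sqrt Real.pi_nonneg,
      ENNReal.toReal_ofReal Real.pi_nonneg]
  have hrad := radial_eval U hU hα hθ
  calc ∫ x : EuclideanSpace ℝ (Fin 2),
        (1 - ∫ s : ℝ, Real.exp (-θ * (s / U) * ‖x‖ ^ (-α)) ∂(gammaMeasure U 1))
      = ∫ x : EuclideanSpace ℝ (Fin 2), f ‖x‖ := rfl
    _ = 2 • (volume (Metric.ball (0:EuclideanSpace ℝ (Fin 2)) 1)).toReal •
          ∫ y in Ioi (0:ℝ), y ^ (2-1) • f y := h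
    _ = 2 * Real.pi * ∫ y in Ioi (0:ℝ), y • f y := by
      rw [hball]
      norm_num [smul_eq_mul]
      ring
    _ = 2 * Real.pi * ((1/α) * (θ/U) ^ ((2:ℝ)/α) * ∑ k ∈ Finset.range U,
          (Nat.choose U k : ℝ) * betaFn ((k : ℝ) + 2 / α) ((U : ℝ) - k - 2 / α)) := by
      rw [← hrad]
    _ = _ := by ring
end

section
/- Let D_c(T_c) denote the cellular coverage radius D_c = (c₁/U_c)^{1/α_c} · (ε K_c /(λ_f C_f))^{1/(δ_f α_c)} where K_c satisfies (T_c−U_c+1)^{δ_f} ≤ K_c ≤ Γ(1−δ_f)(T_c−U_c+1)^{δ_f}. Then with single-user transmission (U_c = 1), D_c = Θ(T_c^{1/α_c}) as T_c → ∞, and with full multiuser transmission (U_c = T_c, hence K_c = 1), D_c = Θ(T_c^{−1/α_c}); hence the ratio D_{c,SU}/D_{c,MU} = Θ(T_c^{2/α_c}). -/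
/-- with cellular coverage radius
`D_c(T_c, U_c) = (c₁/U_c)^{1/α_c} (ε K_c/(λ_f C_f))^{1/(δ_f α_c)}`, where
`(T_c−U_c+1)^{δ_f} ≤ K_c(T_c,U_c) ≤ Γ(1−δ_f)(T_c−U_c+1)^{δ_f}` and
`K_c(T_c,T_c) = 1`: single-user transmission (`U_c = 1`) gives
`D_c = Θ(T_c^{1/α_c})`, full multiuser transmission (`U_c = T_c`) gives
`D_c = Θ(T_c^{−1/α_c})`, and the ratio is `Θ(T_c^{2/α_c})`. -/
theorem coverage_radius_scaling (αc δf c₁ ε lamf Cf : ℝ)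
    (hαc : 0 < αc) (hδ0 : 0 < δf) (hδ1 : δf < 1)
    (hc₁ : 0 < c₁) (hε : 0 < ε) (hlamf : 0 < lamf) (hCf : 0 < Cf)
    (Kc : ℕ → ℕ → ℝ)
    (hKc : ∀ Tc Uc : ℕ, 1 ≤ Uc → Uc ≤ Tc →
      ((Tc - Uc + 1 : ℕ) : ℝ) ^ δf ≤ Kc Tc Uc ∧
      Kc Tc Uc ≤ Real.Gamma (1 - δf) * ((Tc - Uc + 1 : ℕ) : ℝ) ^ δf)
    (hKcMU : ∀ Tc : ℕ, 1 ≤ Tc → Kc Tc Tc = 1) :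
    let Dc : ℕ → ℕ → ℝ := fun Tc Uc =>
      (c₁ / Uc) ^ (1 / αc) * (ε * Kc Tc Uc / (lamf * Cf)) ^ (1 / (δf * αc))
    (∃ k₁ k₂ : ℝ, 0 < k₁ ∧ 0 < k₂ ∧ ∀ Tc : ℕ, 1 ≤ Tc →
        k₁ * (Tc : ℝ) ^ (1 / αc) ≤ Dc Tc 1 ∧ Dc Tc 1 ≤ k₂ * (Tc : ℝ) ^ (1 / αc)) ∧
    (∃ k₃ k₄ : ℝ, 0 < k₃ ∧ 0 < k₄ ∧ ∀ Tc : ℕ, 1 ≤ Tc →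
        k₃ * (Tc : ℝ) ^ (-(1 / αc)) ≤ Dc Tc Tc ∧ Dc Tc Tc ≤ k₄ * (Tc : ℝ) ^ (-(1 / αc))) ∧
    (∃ k₅ k₆ : ℝ, 0 < k₅ ∧ 0 < k₆ ∧ ∀ Tc : ℕ, 1 ≤ Tc →
        k₅ * (Tc : ℝ) ^ (2 / αc) ≤ Dc Tc 1 / Dc Tc Tc ∧
        Dc Tc 1 / Dc Tc Tc ≤ k₆ * (Tc : ℝ) ^ (2 / αc)) := by
  intro Dc
  have hDc : ∀ Tc Uc : ℕ, Dc Tc Uc =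
      (c₁ / Uc) ^ (1 / αc) * (ε * Kc Tc Uc / (lamf * Cf)) ^ (1 / (δf * αc)) :=
    fun _ _ => rfl
  set p : ℝ := 1 / (δf * αc) with hpdef
  set q : ℝ := 1 / αc with hqdef
  have hp : 0 < p := by rw [hpdef]; positivity
  have hq : 0 < q := by rw [hqdef]; positivity
  have hδα : δf * p = q := by rw [hpdef, hqdef]; field_simp
  have hΓ : 0 < Real.Gamma (1 - δf) := Real.Gamma_pos_of_pos (by linarith)
  have hE : 0 < ε / (lamf * Cf) := by positivity
  have hc₁q : 0 < c₁ ^ q := Real.rpow_pos_of_pos hc₁ q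
  have hEp : 0 < (ε / (lamf * Cf)) ^ p := Real.rpow_pos_of_pos hE p
  have hΓp : 0 < Real.Gamma (1 - δf) ^ p := Real.rpow_pos_of_pos hΓ p
  -- single user bounds
  have hSU : ∀ Tc : ℕ, 1 ≤ Tc →
      c₁ ^ q * (ε / (lamf * Cf)) ^ p * (Tc : ℝ) ^ q ≤ Dc Tc 1 ∧
      Dc Tc 1 ≤ c₁ ^ q * (ε / (lamf * Cf)) ^ p * Real.Gamma (1 - δf) ^ p * (Tc : ℝ) ^ q := by
    intro Tc hTc
    have hTc0 : (0 : ℝ) < Tc := by exact_mod_cast hTc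
    obtain ⟨hK1, hK2⟩ := hKc Tc 1 le_rfl hTc
    have hsub : (Tc - 1 + 1 : ℕ) = Tc := Nat.succ_pred_eq_of_pos hTc
    rw [hsub] at hK1 hK2
    have hTδ : (0 : ℝ) < (Tc : ℝ) ^ δf := Real.rpow_pos_of_pos hTc0 δf
    have hK0 : 0 ≤ Kc Tc 1 := le_trans hTδ.le hK1
    have hrw : Dc Tc 1 = c₁ ^ q * ((ε / (lamf * Cf)) ^ p * (Kc Tc 1) ^ p) := by
      rw [hDc, Nat.cast_one, div_one]
      congr 1
      rw [show ε * Kc Tc 1 / (lamf * Cf) = (ε / (lamf * Cf)) * Kc Tc 1 by ring,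
        Real.mul_rpow hE.le hK0]
    have hTq : ((Tc : ℝ) ^ δf) ^ p = (Tc : ℝ) ^ q := by
      rw [← Real.rpow_mul hTc0.le, hδα]
    constructor
    · rw [hrw, ← hTq, mul_assoc]
      gcongr
    · rw [hrw]
      have h1 : (Kc Tc 1) ^ p ≤ Real.Gamma (1 - δf) ^ p * (Tc : ℝ) ^ q := by
        rw [← hTq, ← Real.mul_rpow hΓ.le hTδ.le]
        exact Real.rpow_le_rpow hK0 hK2 hp.le
      calc c₁ ^ q * ((ε / (lamf * Cf)) ^ p * (Kc Tc 1) ^ p)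
          ≤ c₁ ^ q * ((ε / (lamf * Cf)) ^ p * (Real.Gamma (1 - δf) ^ p * (Tc : ℝ) ^ q)) := by
            gcongr
        _ = c₁ ^ q * (ε / (lamf * Cf)) ^ p * Real.Gamma (1 - δf) ^ p * (Tc : ℝ) ^ q := by ring
  -- multiuser exact value
  have hMU : ∀ Tc : ℕ, 1 ≤ Tc →
      Dc Tc Tc = c₁ ^ q * (ε / (lamf * Cf)) ^ p * (Tc : ℝ) ^ (-q) := by
    intro Tc hTc
    have hTc0 : (0 : ℝ) < Tc := by exact_mod_cast hTc
    rw [hDc, hKcMU Tc hTc, mul_one, Real.div_rpow hc₁.le hTc0.le,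
      Real.rpow_neg hTc0.le, div_eq_mul_inv]
    ring
  refine ⟨⟨c₁ ^ q * (ε / (lamf * Cf)) ^ p,
           c₁ ^ q * (ε / (lamf * Cf)) ^ p * Real.Gamma (1 - δf) ^ p,
           by positivity, by positivity, fun Tc hTc => hSU Tc hTc⟩,
         ⟨c₁ ^ q * (ε / (lamf * Cf)) ^ p, c₁ ^ q * (ε / (lamf * Cf)) ^ p,
           by positivity, by positivity, fun Tc hTc => ⟨(hMU Tc hTc).ge, (hMU Tc hTc).le⟩⟩,
         ⟨1, Real.Gamma (1 - δf) ^ p, one_pos, hΓp, ?_⟩⟩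
  intro Tc hTc
  have hTc0 : (0 : ℝ) < Tc := by exact_mod_cast hTc
  have hMUeq := hMU Tc hTc
  have hMUpos : 0 < Dc Tc Tc := by
    rw [hMUeq]; positivity
  have h2exp : (Tc : ℝ) ^ (2 / αc) = (Tc : ℝ) ^ q * (Tc : ℝ) ^ q := by
    rw [← Real.rpow_add hTc0, hqdef]; ring_nf
  have hcancel : (Tc : ℝ) ^ q * (Tc : ℝ) ^ (-q) = 1 := by
    rw [← Real.rpow_add hTc0]; simp
  obtain ⟨hL, hR⟩ := hSU Tc hTc
  constructor
  · rw [one_mul, le_div_iff₀ hMUpos, hMUeq, h2exp,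
      show (Tc : ℝ) ^ q * (Tc : ℝ) ^ q * (c₁ ^ q * (ε / (lamf * Cf)) ^ p * (Tc : ℝ) ^ (-q)) =
        c₁ ^ q * (ε / (lamf * Cf)) ^ p * (Tc : ℝ) ^ q * ((Tc : ℝ) ^ q * (Tc : ℝ) ^ (-q)) from by
          ring, hcancel, mul_one]
    exact hL
  · rw [div_le_iff₀ hMUpos, hMUeq, h2exp,
      show Real.Gamma (1 - δf) ^ p * ((Tc : ℝ) ^ q * (Tc : ℝ) ^ q) *
        (c₁ ^ q * (ε / (lamf * Cf)) ^ p * (Tc : ℝ) ^ (-q)) =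
        c₁ ^ q * (ε / (lamf * Cf)) ^ p * Real.Gamma (1 - δf) ^ p * (Tc : ℝ) ^ q *
          ((Tc : ℝ) ^ q * (Tc : ℝ) ^ (-q)) from by ring, hcancel, mul_one]
    exact hR
end
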